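/- arXiv:2006.03584 — 3 statements merged into one kernel-verified Lean document; each statement's English description precedes it below -/
import Mathlib

section
/- Let P be a signed path on n ≥ 2 vertices, i.e., vertices v₁, …, v_n, edges e_i = v_i v_{i+1} for 1 ≤ i ≤ n−1, and a sign + or − assigned to each edge. Suppose P has exactly one maximal run of consecutive negative edges of odd length, say the edges e_a, …, e_b. Then P is a parity signed graph if and only if the number of positive edges among e₁, …, e_{a−1} and the number of positive edges among e_{b+1}, …, e_{n−1} differ by at most 1. -/
/-- A sign assignment on edges: `σ e` means edge `e` is positive. `(G, σ)` is a
*parity signed graph* if there is a bijective labelling `f : V → {1, …, n}`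
(`n = |V|`) such that an edge is positive iff its endpoints' labels have the same parity. -/
def IsParitySigned {V : Type*} [Fintype V] (G : SimpleGraph V) (σ : Sym2 V → Prop) : Prop :=
  ∃ f : V → ℕ, Set.BijOn f Set.univ (Set.Icc 1 (Fintype.card V)) ∧
    ∀ u v : V, G.Adj u v → (σ s(u, v) ↔ f u % 2 = f v % 2)

/-- The endpoints of `e` get labels of opposite parity under `f`. -/
def diffParity {V : Type*} (f : V → ℕ) : Sym2 V → Prop :=
  Sym2.lift ⟨fun u v => f u % 2 ≠ f v % 2, fun _ _ => propext ne_comm⟩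

/-- Number of negative edges of `G` under the labelling `f`. -/
noncomputable def negCount {V : Type*} [Fintype V] (G : SimpleGraph V) (f : V → ℕ) : ℕ :=
  {e ∈ G.edgeSet | diffParity f e}.ncard

/-- Number of positive edges of `G` under the labelling `f`. -/
noncomputable def posCount {V : Type*} [Fintype V] (G : SimpleGraph V) (f : V → ℕ) : ℕ :=
  {e ∈ G.edgeSet | ¬ diffParity f e}.ncard

/-- The *rna* number: the minimum number of negative edges over all bijective
labellings `f : V → {1, …, n}`. -/
noncomputable def rnaNumber {V : Type*} [Fintype V] (G : SimpleGraph V) : ℕ :=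
  sInf {k | ∃ f : V → ℕ, Set.BijOn f Set.univ (Set.Icc 1 (Fintype.card V)) ∧ negCount G f = k}

/-- The *adhika* number: the maximum number of positive edges over all bijective
labellings `f : V → {1, …, n}`. -/
noncomputable def adhikaNumber {V : Type*} [Fintype V] (G : SimpleGraph V) : ℕ :=
  sSup {k | ∃ f : V → ℕ, Set.BijOn f Set.univ (Set.Icc 1 (Fintype.card V)) ∧ posCount G f = k}

/-- The star `K_{1,q}`: center `0`, leaves the `q` nonzero vertices of `Fin (q+1)`. -/
def starGraph (q : ℕ) : SimpleGraph (Fin (q + 1)) :=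
  SimpleGraph.fromRel (fun u _ => u = 0)

/-- A signed path on `n` vertices `v_1, …, v_n`, given by its sign sequence `s`,
where `s i` means that the edge `e_i = v_i v_{i+1}` (for `1 ≤ i ≤ n-1`) is positive,
is a parity signed graph: there is a bijective labelling `f` of the vertices
`{1, …, n}` by the integers `{1, …, n}` such that each edge is positive iff its
endpoints' labels have the same parity. -/
def PathParitySigned (n : ℕ) (s : ℕ → Prop) : Prop :=
  ∃ f : ℕ → ℕ, Set.BijOn f (Set.Icc 1 n) (Set.Icc 1 n) ∧
    ∀ i : ℕ, 1 ≤ i → i < n → (s i ↔ f i % 2 = f (i + 1) % 2)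

/-- `e_a, e_{a+1}, …, e_b` is a maximal run of consecutive negative edges (a negative
section) of the signed path on `n` vertices with sign sequence `s`. -/
def NegSection (n : ℕ) (s : ℕ → Prop) (a b : ℕ) : Prop :=
  1 ≤ a ∧ a ≤ b ∧ b < n ∧ (∀ i : ℕ, a ≤ i → i ≤ b → ¬ s i) ∧
    (a = 1 ∨ s (a - 1)) ∧ (b = n - 1 ∨ s (b + 1))


open Classical in
noncomputable def negBefore (s : ℕ → Prop) (m : ℕ) : ℕ :=
  ((Finset.Ico 1 m).filter (fun j => ¬ s j)).card

noncomputable def qpar (s : ℕ → Prop) (m : ℕ) : ℕ := negBefore s m % 2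

open Classical in
noncomputable def Pcount (s : ℕ → Prop) (l m : ℕ) : ℕ := ((Finset.Ico l m).filter s).card

noncomputable def Dsum (s : ℕ → Prop) (m : ℕ) : ℤ :=
  ∑ i ∈ Finset.Icc 1 m, ((1 : ℤ) - 2 * (qpar s i : ℤ))

lemma qpar_lt_two (s : ℕ → Prop) (m : ℕ) : qpar s m < 2 := Nat.mod_lt _ (by norm_num)

lemma qpar_one (s : ℕ → Prop) : qpar s 1 = 0 := by
  simp [qpar, negBefore]

open Classical in
lemma negBefore_succ (s : ℕ → Prop) (m : ℕ) (hm : 1 ≤ m) :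
    negBefore s (m + 1) = negBefore s m + (if s m then 0 else 1) := by
  unfold negBefore
  rw [Nat.Ico_succ_right_eq_insert_Ico hm]
  rw [Finset.filter_insert]
  by_cases h : s m <;> simp [h, Finset.card_insert_of_notMem]

open Classical in
lemma Pcount_succ (s : ℕ → Prop) (l m : ℕ) (hm : l ≤ m) :
    Pcount s l (m + 1) = Pcount s l m + (if s m then 1 else 0) := by
  unfold Pcount
  rw [Nat.Ico_succ_right_eq_insert_Ico hm]
  rw [Finset.filter_insert]
  by_cases h : s m <;> simp [h, Finset.card_insert_of_notMem]

lemma Dsum_succ (s : ℕ → Prop) (m : ℕ) :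
    Dsum s (m + 1) = Dsum s m + (1 - 2 * (qpar s (m+1) : ℤ)) := by
  unfold Dsum
  rw [show Finset.Icc 1 (m+1) = insert (m+1) (Finset.Icc 1 m) by
    ext x; simp [Finset.mem_Icc, Finset.mem_insert]; omega]
  rw [Finset.sum_insert (by simp)]
  ring

lemma qpar_succ_pos (s : ℕ → Prop) (m : ℕ) (hm : 1 ≤ m) (h : s m) :
    qpar s (m + 1) = qpar s m := by
  unfold qpar; rw [negBefore_succ s m hm]; simp [h]

lemma qpar_succ_neg (s : ℕ → Prop) (m : ℕ) (hm : 1 ≤ m) (h : ¬ s m) :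
    qpar s (m + 1) + qpar s m = 1 := by
  unfold qpar; rw [negBefore_succ s m hm, if_neg h]; omega

/-- Every negative edge has a run start: a minimal `c` so that all of `[c, i]` is
negative and `c` is a left boundary. -/
lemma exists_run_start (s : ℕ → Prop) (i : ℕ) (hi : 1 ≤ i) (hneg : ¬ s i) :
    ∃ c, 1 ≤ c ∧ c ≤ i ∧ (∀ j, c ≤ j → j ≤ i → ¬ s j) ∧ (c = 1 ∨ s (c - 1)) := by
  induction i using Nat.strong_induction_on with
  | _ i IH =>
    by_cases h1 : i = 1 ∨ s (i - 1)
    · exact ⟨i, hi, le_refl i, fun j hj hj' => by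
        have : j = i := le_antisymm hj' hj; rwa [this], h1⟩
    · push_neg at h1
      obtain ⟨h1, h2⟩ := h1
      have hi2 : 2 ≤ i := by omega
      obtain ⟨c, hc1, hc2, hc3, hc4⟩ := IH (i - 1) (by omega) (by omega) h2
      exact ⟨c, hc1, by omega, fun j hj hj' => by
        rcases Nat.lt_or_ge j i with h | h
        · exact hc3 j hj (by omega)
        · have : j = i := by omega
          rwa [this], hc4⟩

/-- `negBefore` across an all-negative interval. -/
lemma negBefore_run (s : ℕ → Prop) (c m : ℕ) (hc : 1 ≤ c) (hcm : c ≤ m)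
    (hneg : ∀ j, c ≤ j → j < m → ¬ s j) :
    negBefore s m = negBefore s c + (m - c) := by
  induction m with
  | zero => omega
  | succ m IH =>
    rcases Nat.lt_or_ge m c with h | h
    · have : c = m + 1 := by omega
      subst this; simp
    · rw [negBefore_succ s m (by omega), if_neg (hneg m h (by omega)),
        IH (by omega) (fun j hj hj' => hneg j hj (by omega))]
      omega

def NegSection' (n : ℕ) (s : ℕ → Prop) (a b : ℕ) : Prop :=
  1 ≤ a ∧ a ≤ b ∧ b < n ∧ (∀ i : ℕ, a ≤ i → i ≤ b → ¬ s i) ∧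
    (a = 1 ∨ s (a - 1)) ∧ (b = n - 1 ∨ s (b + 1))

lemma prefix_boundary (n : ℕ) (s : ℕ → Prop) (a b : ℕ) (hab : NegSection' n s a b)
    (huniq : ∀ a' b', NegSection' n s a' b' → Odd (b' - a' + 1) → a' = a ∧ b' = b) :
    ∀ m, 1 ≤ m → m ≤ a → (m = 1 ∨ s (m - 1)) → qpar s m = 0 := by
  obtain ⟨ha1, hab', hbn, hneg, hlow, hhigh⟩ := hab
  intro m
  induction m using Nat.strong_induction_on with
  | _ m IH =>
    intro hm1 hma hbd
    by_cases hm : m = 1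
    · subst hm; exact qpar_one s
    have hsm : s (m - 1) := hbd.resolve_left hm
    have hm2 : 2 ≤ m := by omega
    have key : qpar s (m - 1) = 0 := by
      by_cases hbd' : m - 1 = 1 ∨ s (m - 1 - 1)
      · exact IH (m - 1) (by omega) (by omega) (by omega) hbd'
      · push_neg at hbd'
        obtain ⟨hne1, hns⟩ := hbd'
        have hm3 : 3 ≤ m := by omega
        have hns' : ¬ s (m - 2) := by
          have : m - 1 - 1 = m - 2 := by omega
          rwa [this] at hns
        obtain ⟨c, hc1, hc2, hc3, hc4⟩ := exists_run_start s (m - 2) (by omega) hns'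
        have hcq : qpar s c = 0 := IH c (by omega) hc1 (by omega) hc4
        have hsec : NegSection' n s c (m - 2) :=
          ⟨hc1, hc2, by omega, hc3, hc4, Or.inr (by
            have : m - 2 + 1 = m - 1 := by omega
            rw [this]; exact hsm)⟩
        have heven : ¬ Odd (m - 2 - c + 1) := by
          intro ho
          have := huniq c (m - 2) hsec ho
          omega
        rw [Nat.odd_iff] at heven
        have hnb : negBefore s (m - 1) = negBefore s c + (m - 1 - c) :=
          negBefore_run s c (m - 1) hc1 (by omega) (fun j hj hj' => hc3 j hj (by omega))
        unfold qpar at *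
        omega
    have e : m - 1 + 1 = m := by omega
    rw [← e]
    rw [qpar_succ_pos s (m - 1) (by omega) hsm]
    exact key

lemma prefix_D (n : ℕ) (s : ℕ → Prop) (a b : ℕ) (hab : NegSection' n s a b)
    (huniq : ∀ a' b', NegSection' n s a' b' → Odd (b' - a' + 1) → a' = a ∧ b' = b) :
    ∀ m, 1 ≤ m → m ≤ a → Dsum s m = 1 + (Pcount s 1 m : ℤ) - (qpar s m : ℤ) := by
  intro m hm1
  induction m, hm1 using Nat.le_induction with
  | base =>
    intro _
    simp [Dsum, Pcount, qpar_one]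
  | succ m hm IH =>
    intro hma
    have IH' := IH (by omega)
    rw [Dsum_succ, Pcount_succ s 1 m hm]
    by_cases hs : s m
    · have h1 : qpar s (m + 1) = 0 := by
        apply prefix_boundary n s a b ⟨hab.1, hab.2.1, hab.2.2.1, hab.2.2.2.1, hab.2.2.2.2.1,
          hab.2.2.2.2.2⟩ huniq (m + 1) (by omega) hma
        right
        simpa using hs
      have h2 : qpar s (m + 1) = qpar s m := qpar_succ_pos s m hm hs
      rw [if_pos hs]
      push_cast
      omega
    · have h3 := qpar_succ_neg s m hm hs
      rw [if_neg hs]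
      push_cast
      omega

lemma middle_D (n : ℕ) (s : ℕ → Prop) (a b : ℕ) (hab : NegSection' n s a b)
    (hq : qpar s a = 0) :
    ∀ m, a ≤ m → m ≤ b + 1 →
      qpar s m = (m - a) % 2 ∧ Dsum s m = Dsum s a - ((m - a) % 2 : ℕ) := by
  obtain ⟨ha1, hab', hbn, hneg, hlow, hhigh⟩ := hab
  intro m hm1
  induction m, hm1 using Nat.le_induction with
  | base =>
    intro _
    refine ⟨by simpa using hq, by simp⟩
  | succ m hm IH =>
    intro hmb
    obtain ⟨IH1, IH2⟩ := IH (by omega)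
    have hns : ¬ s m := hneg m hm (by omega)
    have h3 := qpar_succ_neg s m (by omega) hns
    have h4 : qpar s (m + 1) = (m + 1 - a) % 2 := by omega
    refine ⟨h4, ?_⟩
    rw [Dsum_succ, IH2, h4]
    have h5 : (m + 1 - a) % 2 + (m - a) % 2 = 1 := by omega
    push_cast
    omega

lemma suffix_boundary (n : ℕ) (s : ℕ → Prop) (a b : ℕ) (hab : NegSection' n s a b)
    (huniq : ∀ a' b', NegSection' n s a' b' → Odd (b' - a' + 1) → a' = a ∧ b' = b)
    (hq1 : qpar s (b + 1) = 1) :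
    ∀ m, b + 1 ≤ m → m ≤ n → (m = b + 1 ∨ s (m - 1)) → qpar s m = 1 := by
  obtain ⟨ha1, hab', hbn, hneg, hlow, hhigh⟩ := hab
  intro m
  induction m using Nat.strong_induction_on with
  | _ m IH =>
    intro hmb hmn hbd
    by_cases hm : m = b + 1
    · subst hm; exact hq1
    have hsm : s (m - 1) := hbd.resolve_left hm
    have hm2 : b + 2 ≤ m := by omega
    have key : qpar s (m - 1) = 1 := by
      by_cases hbd' : m - 1 = b + 1 ∨ s (m - 1 - 1)
      · exact IH (m - 1) (by omega) (by omega) (by omega) hbd'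
      · push_neg at hbd'
        obtain ⟨hne1, hns⟩ := hbd'
        have hm3 : b + 3 ≤ m := by omega
        have hns' : ¬ s (m - 2) := by
          have : m - 1 - 1 = m - 2 := by omega
          rwa [this] at hns
        have hsb1 : s (b + 1) := by
          rcases hhigh with h | h
          · omega
          · exact h
        obtain ⟨c, hc1, hc2, hc3, hc4⟩ := exists_run_start s (m - 2) (by omega) hns'
        have hcb : b + 2 ≤ c := by
          by_contra hcon
          exact hc3 (b + 1) (by omega) (by omega) hsb1
        have hsc : s (c - 1) := by
          rcases hc4 with h | h
          · omega
          · exact h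
        have hcq : qpar s c = 1 := IH c (by omega) (by omega) (by omega) (Or.inr hsc)
        have hsec : NegSection' n s c (m - 2) :=
          ⟨hc1, hc2, by omega, hc3, hc4, Or.inr (by
            have : m - 2 + 1 = m - 1 := by omega
            rw [this]; exact hsm)⟩
        have heven : ¬ Odd (m - 2 - c + 1) := by
          intro ho
          have := huniq c (m - 2) hsec ho
          omega
        rw [Nat.odd_iff] at heven
        have hnb : negBefore s (m - 1) = negBefore s c + (m - 1 - c) :=
          negBefore_run s c (m - 1) (by omega) (by omega)
            (fun j hj hj' => hc3 j hj (by omega))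
        unfold qpar at *
        omega
    have e : m - 1 + 1 = m := by omega
    rw [← e, qpar_succ_pos s (m - 1) (by omega) hsm]
    exact key

lemma suffix_D (n : ℕ) (s : ℕ → Prop) (a b : ℕ) (hab : NegSection' n s a b)
    (huniq : ∀ a' b', NegSection' n s a' b' → Odd (b' - a' + 1) → a' = a ∧ b' = b)
    (hq1 : qpar s (b + 1) = 1) :
    ∀ m, b + 1 ≤ m → m ≤ n →
      Dsum s m = Dsum s (b + 1) - (Pcount s (b + 1) m : ℤ) + (1 - (qpar s m : ℤ)) := by
  intro m hm1
  induction m, hm1 using Nat.le_induction with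
  | base =>
    intro _
    simp [Pcount, hq1]
  | succ m hm IH =>
    intro hmn
    have IH' := IH (by omega)
    rw [Dsum_succ, Pcount_succ s (b + 1) m hm]
    have hb1 : 1 ≤ b := hab.1.trans hab.2.1
    by_cases hs : s m
    · have h1 : qpar s (m + 1) = 1 := by
        apply suffix_boundary n s a b hab huniq hq1 (m + 1) (by omega) hmn
        right
        simpa using hs
      have h2 : qpar s (m + 1) = qpar s m := qpar_succ_pos s m (by omega) hs
      rw [if_pos hs]
      push_cast
      omega
    · have h3 := qpar_succ_neg s m (by omega) hs
      have h4 := qpar_lt_two s m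
      have h5 := qpar_lt_two s (m + 1)
      rw [if_neg hs]
      push_cast
      omega

lemma qpar_last (n : ℕ) (s : ℕ → Prop) (a b : ℕ) (hab : NegSection' n s a b)
    (huniq : ∀ a' b', NegSection' n s a' b' → Odd (b' - a' + 1) → a' = a ∧ b' = b)
    (hq1 : qpar s (b + 1) = 1) : qpar s n = 1 := by
  obtain ⟨ha1, hab', hbn, hneg, hlow, hhigh⟩ := hab
  by_cases hnb : n = b + 1
  · rw [hnb]; exact hq1
  have hn2 : b + 2 ≤ n := by omega
  have hsb1 : s (b + 1) := by
    rcases hhigh with h | h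
    · omega
    · exact h
  by_cases hsn : s (n - 1)
  · exact suffix_boundary n s a b ⟨ha1, hab', hbn, hneg, hlow, hhigh⟩ huniq hq1 n
      (by omega) (le_refl n) (Or.inr hsn)
  · obtain ⟨c, hc1, hc2, hc3, hc4⟩ := exists_run_start s (n - 1) (by omega) hsn
    have hcb : b + 2 ≤ c := by
      by_contra hcon
      exact hc3 (b + 1) (by omega) (by omega) hsb1
    have hsc : s (c - 1) := by
      rcases hc4 with h | h
      · omega
      · exact h
    have hcq : qpar s c = 1 :=
      suffix_boundary n s a b ⟨ha1, hab', hbn, hneg, hlow, hhigh⟩ huniq hq1 c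
        (by omega) (by omega) (Or.inr hsc)
    have hsec : NegSection' n s c (n - 1) :=
      ⟨hc1, hc2, by omega, hc3, hc4, Or.inl rfl⟩
    have heven : ¬ Odd (n - 1 - c + 1) := by
      intro ho
      have := huniq c (n - 1) hsec ho
      omega
    rw [Nat.odd_iff] at heven
    have hnb' : negBefore s n = negBefore s c + (n - c) :=
      negBefore_run s c n (by omega) (by omega) (fun j hj hj' => hc3 j hj (by omega))
    unfold qpar at *
    omega

/-- The grand identity: `Dsum s n = P₁ - P₂`. -/
lemma Dsum_eq (n : ℕ) (s : ℕ → Prop) (a b : ℕ) (hn : 2 ≤ n) (hab : NegSection' n s a b)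
    (hodd : Odd (b - a + 1))
    (huniq : ∀ a' b', NegSection' n s a' b' → Odd (b' - a' + 1) → a' = a ∧ b' = b) :
    Dsum s n = (Pcount s 1 a : ℤ) - (Pcount s (b + 1) n : ℤ) := by
  obtain ⟨ha1, hab', hbn, hneg, hlow, hhigh⟩ := hab
  have hab0 : NegSection' n s a b := ⟨ha1, hab', hbn, hneg, hlow, hhigh⟩
  have hqa : qpar s a = 0 :=
    prefix_boundary n s a b hab0 huniq a ha1 (le_refl a) hlow
  have hDa : Dsum s a = 1 + (Pcount s 1 a : ℤ) - (qpar s a : ℤ) :=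
    prefix_D n s a b hab0 huniq a ha1 (le_refl a)
  obtain ⟨hqb1, hDb1⟩ := middle_D n s a b hab0 hqa (b + 1) (by omega) (le_refl _)
  rw [Nat.odd_iff] at hodd
  have e1 : (b + 1 - a) % 2 = 1 := by omega
  rw [e1] at hqb1 hDb1
  have hDn := suffix_D n s a b hab0 huniq hqb1 n (by omega) (le_refl n)
  have hqn : qpar s n = 1 := qpar_last n s a b hab0 huniq hqb1
  rw [hqn] at hDn
  rw [hDn, hDb1, hDa, hqa]
  push_cast
  ring

lemma Dsum_count (s : ℕ → Prop) (m : ℕ) :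
    Dsum s m = 2 * (((Finset.Icc 1 m).filter (fun i => qpar s i = 0)).card : ℤ) - m := by
  induction m with
  | zero => simp [Dsum]
  | succ m IH =>
    rw [Dsum_succ, IH]
    rw [show Finset.Icc 1 (m + 1) = insert (m + 1) (Finset.Icc 1 m) by
      ext x; simp [Finset.mem_Icc, Finset.mem_insert]; omega]
    rw [Finset.filter_insert]
    have h2 := qpar_lt_two s (m + 1)
    by_cases h : qpar s (m + 1) = 0
    · rw [if_pos h, Finset.card_insert_of_notMem (by simp), h]
      push_cast
      ring
    · rw [if_neg h]
      have h1 : qpar s (m + 1) = 1 := by omega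
      rw [h1]
      push_cast
      ring

lemma count_odd_Icc (n : ℕ) :
    ((Finset.Icc 1 n).filter (fun x => x % 2 = 1)).card = (n + 1) / 2 := by
  induction n with
  | zero => simp
  | succ n IH =>
    rw [show Finset.Icc 1 (n + 1) = insert (n + 1) (Finset.Icc 1 n) by
      ext x; simp [Finset.mem_Icc, Finset.mem_insert]; omega]
    rw [Finset.filter_insert]
    by_cases h : (n + 1) % 2 = 1
    · rw [if_pos h, Finset.card_insert_of_notMem (by simp), IH]
      omega
    · rw [if_neg h, IH]
      omega

lemma count_even_Icc (n : ℕ) :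
    ((Finset.Icc 1 n).filter (fun x => x % 2 = 0)).card = n / 2 := by
  induction n with
  | zero => simp
  | succ n IH =>
    rw [show Finset.Icc 1 (n + 1) = insert (n + 1) (Finset.Icc 1 n) by
      ext x; simp [Finset.mem_Icc, Finset.mem_insert]; omega]
    rw [Finset.filter_insert]
    by_cases h : (n + 1) % 2 = 0
    · rw [if_pos h, Finset.card_insert_of_notMem (by simp), IH]
      omega
    · rw [if_neg h, IH]
      omega

lemma ncard_eq_card_filter (n : ℕ) (p : ℕ → Prop) [DecidablePred p] :
    {i : ℕ | 1 ≤ i ∧ i ≤ n ∧ p i}.ncard = ((Finset.Icc 1 n).filter p).card := by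
  rw [show {i : ℕ | 1 ≤ i ∧ i ≤ n ∧ p i} = ↑((Finset.Icc 1 n).filter p) by
    ext x
    simp only [Set.mem_setOf_eq, Finset.coe_filter, Finset.mem_Icc, Set.mem_setOf_eq]
    tauto]
  exact Set.ncard_coe_finset _

open Classical in
lemma exists_bijOn_matching (n : ℕ) (p q : ℕ → Prop)
    (hn : {i : ℕ | 1 ≤ i ∧ i ≤ n ∧ p i}.ncard = {i : ℕ | 1 ≤ i ∧ i ≤ n ∧ q i}.ncard) :
    ∃ f : ℕ → ℕ, Set.BijOn f (Set.Icc 1 n) (Set.Icc 1 n) ∧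
      ∀ i ∈ Set.Icc 1 n, (p i ↔ q (f i)) := by
  have h : ((Finset.Icc 1 n).filter p).card = ((Finset.Icc 1 n).filter q).card := by
    rw [← ncard_eq_card_filter n p, ← ncard_eq_card_filter n q]
    exact hn
  have hBD : ((Finset.Icc 1 n).filter (fun i => ¬ p i)).card
      = ((Finset.Icc 1 n).filter (fun i => ¬ q i)).card := by
    have h1 := Finset.card_filter_add_card_filter_not
      (s := Finset.Icc 1 n) (p := p)
    have h2 := Finset.card_filter_add_card_filter_not
      (s := Finset.Icc 1 n) (p := q)
    omega
  set A := (Finset.Icc 1 n).filter p with hA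
  set B := (Finset.Icc 1 n).filter (fun i => ¬ p i) with hB
  set C := (Finset.Icc 1 n).filter q with hC
  set D := (Finset.Icc 1 n).filter (fun i => ¬ q i) with hD
  let e1 : A ≃ C := Finset.equivOfCardEq h
  let e2 : B ≃ D := Finset.equivOfCardEq hBD
  let f : ℕ → ℕ := fun i =>
    if hi : i ∈ A then (e1 ⟨i, hi⟩ : ℕ) else if hi : i ∈ B then (e2 ⟨i, hi⟩ : ℕ) else 0
  have hfa : ∀ i (hi : i ∈ A), f i = (e1 ⟨i, hi⟩ : ℕ) := fun i hi => dif_pos hi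
  have hfb : ∀ i (hi : i ∈ B), f i = (e2 ⟨i, hi⟩ : ℕ) := by
    intro i hi
    have hna : i ∉ A := by
      simp only [hA, hB, Finset.mem_filter] at hi ⊢
      tauto
    show (if hi : i ∈ A then (e1 ⟨i, hi⟩ : ℕ) else if hi : i ∈ B then (e2 ⟨i, hi⟩ : ℕ) else 0)
      = (e2 ⟨i, hi⟩ : ℕ)
    rw [dif_neg hna, dif_pos hi]
  have hmem : ∀ i, i ∈ Set.Icc 1 n → i ∈ A ∨ i ∈ B := by
    intro i hi
    have : i ∈ Finset.Icc 1 n := by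
      simp only [Finset.mem_Icc]; exact Set.mem_Icc.mp hi
    by_cases hp : p i
    · left; simp only [hA, Finset.mem_filter]; exact ⟨this, hp⟩
    · right; simp only [hB, Finset.mem_filter]; exact ⟨this, hp⟩
  have hfaC : ∀ i (hi : i ∈ A), f i ∈ C := fun i hi => by rw [hfa i hi]; exact (e1 ⟨i, hi⟩).2
  have hfbD : ∀ i (hi : i ∈ B), f i ∈ D := fun i hi => by rw [hfb i hi]; exact (e2 ⟨i, hi⟩).2
  have hCq : ∀ x, x ∈ C → (x ∈ Set.Icc 1 n ∧ q x) := by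
    intro x hx
    simp only [hC, Finset.mem_filter, Finset.mem_Icc] at hx
    exact ⟨Set.mem_Icc.mpr hx.1, hx.2⟩
  have hDq : ∀ x, x ∈ D → (x ∈ Set.Icc 1 n ∧ ¬ q x) := by
    intro x hx
    simp only [hD, Finset.mem_filter, Finset.mem_Icc] at hx
    exact ⟨Set.mem_Icc.mpr hx.1, hx.2⟩
  refine ⟨f, ⟨?_, ?_, ?_⟩, ?_⟩
  · -- MapsTo
    intro i hi
    rcases hmem i hi with h' | h'
    · exact (hCq _ (hfaC i h')).1
    · exact (hDq _ (hfbD i h')).1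
  · -- InjOn
    intro i hi j hj hij
    rcases hmem i hi with hi' | hi' <;> rcases hmem j hj with hj' | hj'
    · rw [hfa i hi', hfa j hj'] at hij
      have := e1.injective (Subtype.coe_injective hij)
      exact congrArg Subtype.val this
    · exact absurd ((hCq _ (hfaC i hi')).2) (by rw [hij]; exact (hDq _ (hfbD j hj')).2)
    · exact absurd ((hCq _ (hfaC j hj')).2) (by rw [← hij]; exact (hDq _ (hfbD i hi')).2)
    · rw [hfb i hi', hfb j hj'] at hij
      have := e2.injective (Subtype.coe_injective hij)
      exact congrArg Subtype.val this
  · -- SurjOn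
    intro y hy
    by_cases hq : q y
    · have hyC : y ∈ C := by
        simp only [hC, Finset.mem_filter, Finset.mem_Icc]
        exact ⟨Set.mem_Icc.mp hy, hq⟩
      refine ⟨(e1.symm ⟨y, hyC⟩ : ℕ), ?_, ?_⟩
      · have := (e1.symm ⟨y, hyC⟩).2
        simp only [hA, Finset.mem_filter, Finset.mem_Icc] at this
        exact Set.mem_Icc.mpr this.1
      · rw [hfa _ (e1.symm ⟨y, hyC⟩).2]
        simp
    · have hyD : y ∈ D := by
        simp only [hD, Finset.mem_filter, Finset.mem_Icc]
        exact ⟨Set.mem_Icc.mp hy, hq⟩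
      refine ⟨(e2.symm ⟨y, hyD⟩ : ℕ), ?_, ?_⟩
      · have := (e2.symm ⟨y, hyD⟩).2
        simp only [hB, Finset.mem_filter, Finset.mem_Icc] at this
        exact Set.mem_Icc.mpr this.1
      · rw [hfb _ (e2.symm ⟨y, hyD⟩).2]
        simp
  · -- matching
    intro i hi
    rcases hmem i hi with h' | h'
    · have hp : p i := by
        simp only [hA, Finset.mem_filter] at h'; exact h'.2
      exact iff_of_true hp (hCq _ (hfaC i h')).2
    · have hp : ¬ p i := by
        simp only [hB, Finset.mem_filter] at h'; exact h'.2
      exact iff_of_false hp (hDq _ (hfbD i h')).2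

lemma parity_prop (n : ℕ) (s : ℕ → Prop) (f : ℕ → ℕ)
    (hf : ∀ i, 1 ≤ i → i < n → (s i ↔ f i % 2 = f (i + 1) % 2)) :
    ∀ m, 1 ≤ m → m ≤ n → f m % 2 = (f 1 % 2 + qpar s m) % 2 := by
  intro m hm
  induction m, hm using Nat.le_induction with
  | base => intro _; rw [qpar_one]; omega
  | succ m hm IH =>
    intro hmn
    have IH' := IH (by omega)
    have h := hf m hm (by omega)
    by_cases hs : s m
    · have h2 := qpar_succ_pos s m hm hs
      have h3 := h.mp hs
      omega
    · have h2 := qpar_succ_neg s m hm hs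
      have h3 : ¬ (f m % 2 = f (m + 1) % 2) := fun hh => hs (h.mpr hh)
      omega

lemma card_image_parity (n : ℕ) (f : ℕ → ℕ)
    (hbij : Set.BijOn f (Set.Icc 1 n) (Set.Icc 1 n)) :
    ((Finset.Icc 1 n).filter (fun i => f i % 2 = 1)).card
      = ((Finset.Icc 1 n).filter (fun x => x % 2 = 1)).card := by
  apply Finset.card_bij (fun i _ => f i)
  · intro i hi
    simp only [Finset.mem_filter, Finset.mem_Icc] at hi ⊢
    have := hbij.mapsTo (Set.mem_Icc.mpr hi.1)
    exact ⟨Set.mem_Icc.mp this, hi.2⟩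
  · intro i hi j hj hij
    simp only [Finset.mem_filter, Finset.mem_Icc] at hi hj
    exact hbij.injOn (Set.mem_Icc.mpr hi.1) (Set.mem_Icc.mpr hj.1) hij
  · intro y hy
    simp only [Finset.mem_filter, Finset.mem_Icc] at hy
    obtain ⟨x, hx, hfx⟩ := hbij.surjOn (Set.mem_Icc.mpr hy.1)
    refine ⟨x, ?_, hfx⟩
    simp only [Finset.mem_filter, Finset.mem_Icc]
    exact ⟨Set.mem_Icc.mp hx, by rw [hfx]; exact hy.2⟩

open Classical in
lemma Pcount_eq_ncard (s : ℕ → Prop) (l m : ℕ) :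
    ({i : ℕ | l ≤ i ∧ i < m ∧ s i}).ncard = Pcount s l m := by
  unfold Pcount
  rw [show {i : ℕ | l ≤ i ∧ i < m ∧ s i} = ↑((Finset.Ico l m).filter s) by
    ext x
    simp only [Set.mem_setOf_eq, Finset.coe_filter, Finset.mem_Ico, Set.mem_setOf_eq]
    tauto]
  exact Set.ncard_coe_finset _

lemma build_edge_iff (n : ℕ) (s : ℕ → Prop) (t : ℕ) (ht : t < 2) (f : ℕ → ℕ)
    (hmatch : ∀ i ∈ Set.Icc 1 n, (qpar s i = 0 ↔ f i % 2 = t)) :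
    ∀ i, 1 ≤ i → i < n → (s i ↔ f i % 2 = f (i + 1) % 2) := by
  intro i h1 h2
  have m1 := hmatch i (Set.mem_Icc.mpr ⟨h1, by omega⟩)
  have m2 := hmatch (i + 1) (Set.mem_Icc.mpr ⟨by omega, by omega⟩)
  have hq1 := qpar_lt_two s i
  have hq2 := qpar_lt_two s (i + 1)
  by_cases hs : s i
  · refine iff_of_true hs ?_
    have he := qpar_succ_pos s i h1 hs
    by_cases hqi : qpar s i = 0
    · have a1 := m1.mp hqi
      have a2 := m2.mp (by omega)
      omega
    · have a1 : ¬ (f i % 2 = t) := fun hh => hqi (m1.mpr hh)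
      have a2 : ¬ (f (i + 1) % 2 = t) := fun hh => by
        have := m2.mpr hh; omega
      omega
  · refine iff_of_false hs ?_
    have he := qpar_succ_neg s i h1 hs
    intro hcon
    by_cases hqi : qpar s i = 0
    · have a1 := m1.mp hqi
      have a2 : ¬ (f (i + 1) % 2 = t) := fun hh => by
        have := m2.mpr hh; omega
      omega
    · have a1 : ¬ (f i % 2 = t) := fun hh => hqi (m1.mpr hh)
      have a2 := m2.mp (by omega)
      omega

/-- If a signed path on `n ≥ 2` vertices has exactly one negative
section of odd length, namely `e_a, …, e_b`, then it is a parity signed graph iff the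
numbers of positive edges strictly before `e_a` and strictly after `e_b` differ by at
most `1`. -/
theorem path_one_odd_negative_section (n : ℕ) (hn : 2 ≤ n) (s : ℕ → Prop) (a b : ℕ)
    (hab : NegSection n s a b) (hodd : Odd (b - a + 1))
    (huniq : ∀ a' b' : ℕ, NegSection n s a' b' → Odd (b' - a' + 1) → a' = a ∧ b' = b) :
    PathParitySigned n s ↔
      |({i : ℕ | 1 ≤ i ∧ i < a ∧ s i}.ncard : ℤ) -
        ({i : ℕ | b + 1 ≤ i ∧ i < n ∧ s i}.ncard : ℤ)| ≤ 1 := by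
  classical
  have hab' : NegSection' n s a b := hab
  have huniq' : ∀ a' b', NegSection' n s a' b' → Odd (b' - a' + 1) → a' = a ∧ b' = b :=
    fun a' b' h ho => huniq a' b' h ho
  rw [Pcount_eq_ncard s 1 a, Pcount_eq_ncard s (b + 1) n]
  have hDeq := Dsum_eq n s a b hn hab' hodd huniq'
  have hDc := Dsum_count s n
  set c0 := ((Finset.Icc 1 n).filter (fun i => qpar s i = 0)).card with hc0
  have hkey : 2 * (c0 : ℤ) - n = (Pcount s 1 a : ℤ) - (Pcount s (b + 1) n : ℤ) := by
    rw [← hDc, hDeq]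
  have hodds := count_odd_Icc n
  have hevens := count_even_Icc n
  have hIcc : (Finset.Icc 1 n).card = n := by rw [Nat.card_Icc]; omega
  have hc0le : c0 ≤ n := le_trans (Finset.card_filter_le _ _) (le_of_eq hIcc)
  constructor
  · rintro ⟨f, hbij, hf⟩
    have hpp := parity_prop n s f hf
    have hcard := card_image_parity n f hbij
    rw [hodds] at hcard
    rw [abs_le]
    by_cases h1 : f 1 % 2 = 1
    · have heq : (Finset.Icc 1 n).filter (fun i => f i % 2 = 1)
          = (Finset.Icc 1 n).filter (fun i => qpar s i = 0) := by
        apply Finset.filter_congr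
        intro x hx
        simp only [Finset.mem_Icc] at hx
        have hx1 := hpp x hx.1 hx.2
        have hx2 := qpar_lt_two s x
        constructor <;> intro <;> omega
      rw [heq] at hcard
      constructor <;> omega
    · have heq : (Finset.Icc 1 n).filter (fun i => f i % 2 = 1)
          = (Finset.Icc 1 n).filter (fun i => ¬ qpar s i = 0) := by
        apply Finset.filter_congr
        intro x hx
        simp only [Finset.mem_Icc] at hx
        have hx1 := hpp x hx.1 hx.2
        have hx2 := qpar_lt_two s x
        constructor <;> intro <;> omega
      rw [heq] at hcard
      have htot := Finset.card_filter_add_card_filter_not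
        (s := Finset.Icc 1 n) (p := fun i => qpar s i = 0)
      constructor <;> omega
  · intro hle
    rw [abs_le] at hle
    have hc : c0 = (n + 1) / 2 ∨ c0 = n / 2 := by omega
    rcases hc with hc | hc
    · obtain ⟨f, hbij, hmatch⟩ := exists_bijOn_matching n (fun i => qpar s i = 0)
        (fun x => x % 2 = 1) (by
          rw [ncard_eq_card_filter n (fun i => qpar s i = 0),
            ncard_eq_card_filter n (fun x => x % 2 = 1), hodds, ← hc0]
          exact hc)
      exact ⟨f, hbij, build_edge_iff n s 1 (by omega) f hmatch⟩
    · obtain ⟨f, hbij, hmatch⟩ := exists_bijOn_matching n (fun i => qpar s i = 0)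
        (fun x => x % 2 = 0) (by
          rw [ncard_eq_card_filter n (fun i => qpar s i = 0),
            ncard_eq_card_filter n (fun x => x % 2 = 0), hevens, ← hc0]
          exact hc)
      exact ⟨f, hbij, build_edge_iff n s 0 (by omega) f hmatch⟩
end

section
/- For every n ≥ 4, the rna number of the wheel W_n on n vertices equals ⌊(n+4)/2⌋; that is, the minimum over all bijections f : V(W_n) → {1, …, n} of the number of edges whose endpoints receive labels of opposite parity is ⌊(n+4)/2⌋. -/
/-- The wheel on `m + 1` vertices: a hub (`none`) adjacent to every vertex of a cycle
`C_m` on the vertices `some i`. -/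
def wheelGraph (m : ℕ) : SimpleGraph (Option (Fin m)) :=
  SimpleGraph.fromRel (fun a b =>
    (a = none ∧ b ≠ none) ∨
    (∃ i j : Fin m, a = some i ∧ b = some j ∧ (SimpleGraph.cycleGraph m).Adj i j))

open SimpleGraph

lemma fin_ne_add_one {m : ℕ} (i : Fin (m + 3)) : i ≠ i + 1 := by
  intro h
  have h1 : (1 : Fin (m + 3)) = 0 := left_eq_add.mp h
  simpa using h1

lemma wheel_adj_iff {m : ℕ} (a b : Option (Fin (m + 3))) :
    (wheelGraph (m + 3)).Adj a b ↔
      (∃ i : Fin (m + 3), (a = none ∧ b = some i) ∨ (a = some i ∧ b = none)) ∨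
      (∃ i j : Fin (m + 3), a = some i ∧ b = some j ∧ (j = i + 1 ∨ i = j + 1)) := by
  have hcyc : ∀ i j : Fin (m + 3), (cycleGraph (m + 3)).Adj i j ↔ (j = i + 1 ∨ i = j + 1) := by
    intro i j
    rw [cycleGraph_adj (n := m + 1), sub_eq_iff_eq_add', sub_eq_iff_eq_add']
    tauto
  rw [wheelGraph, SimpleGraph.fromRel_adj]
  constructor
  · rintro ⟨hab, (⟨rfl, hb⟩ | ⟨i, j, rfl, rfl, hadj⟩) | (⟨rfl, ha⟩ | ⟨i, j, rfl, rfl, hadj⟩)⟩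
    · obtain ⟨i, rfl⟩ := Option.ne_none_iff_exists'.mp hb
      exact Or.inl ⟨i, Or.inl ⟨rfl, rfl⟩⟩
    · exact Or.inr ⟨i, j, rfl, rfl, (hcyc i j).mp hadj⟩
    · obtain ⟨i, rfl⟩ := Option.ne_none_iff_exists'.mp ha
      exact Or.inl ⟨i, Or.inr ⟨rfl, rfl⟩⟩
    · exact Or.inr ⟨j, i, rfl, rfl, ((hcyc i j).mp hadj).symm⟩
  · rintro (⟨i, (⟨rfl, rfl⟩ | ⟨rfl, rfl⟩)⟩ | ⟨i, j, rfl, rfl, h⟩)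
    · exact ⟨by simp, Or.inl (Or.inl ⟨rfl, by simp⟩)⟩
    · exact ⟨by simp, Or.inr (Or.inl ⟨rfl, by simp⟩)⟩
    · refine ⟨?_, Or.inl (Or.inr ⟨i, j, rfl, rfl, (hcyc i j).mpr h⟩)⟩
      simp only [ne_eq, Option.some.injEq]
      rintro rfl
      rcases h with h | h <;> exact fin_ne_add_one i h

lemma fin_two_ne {m : ℕ} (i : Fin (m + 3)) : i ≠ i + 1 + 1 := by
  intro h
  rw [add_assoc] at h
  have h1 : (1 + 1 : Fin (m + 3)) = 0 := left_eq_add.mp h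
  have : ((1 + 1 : Fin (m + 3)) : ℕ) = 0 := by rw [h1]; rfl
  rw [Fin.val_add_eq_ite] at this
  simp at this

lemma negCount_wheel {m : ℕ} (f : Option (Fin (m + 3)) → ℕ) :
    negCount (wheelGraph (m + 3)) f =
      {i : Fin (m + 3) | f (some i) % 2 ≠ f none % 2}.ncard +
      {i : Fin (m + 3) | f (some i) % 2 ≠ f (some (i + 1)) % 2}.ncard := by
  classical
  set H : Set (Fin (m + 3)) := {i | f (some i) % 2 ≠ f none % 2} with hH
  set C : Set (Fin (m + 3)) := {i | f (some i) % 2 ≠ f (some (i + 1)) % 2} with hC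
  have hsplit : {e ∈ (wheelGraph (m + 3)).edgeSet | diffParity f e} =
      (fun i => s(none, some i)) '' H ∪ (fun i => s(some i, some (i + 1))) '' C := by
    ext e
    induction e using Sym2.ind with
    | _ u v =>
      simp only [Set.mem_setOf_eq, SimpleGraph.mem_edgeSet, Set.mem_union, Set.mem_image,
        wheel_adj_iff, diffParity, Sym2.lift_mk]
      constructor
      · rintro ⟨(⟨i, (⟨rfl, rfl⟩ | ⟨rfl, rfl⟩)⟩ | ⟨i, j, rfl, rfl, (rfl | rfl)⟩), hpar⟩
        · exact Or.inl ⟨i, Ne.symm hpar, rfl⟩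
        · exact Or.inl ⟨i, hpar, Sym2.eq_swap⟩
        · exact Or.inr ⟨i, hpar, rfl⟩
        · exact Or.inr ⟨j, Ne.symm hpar, Sym2.eq_swap⟩
      · rintro (⟨i, hi, he⟩ | ⟨i, hi, he⟩) <;> rw [Sym2.eq_iff] at he <;>
          rcases he with ⟨rfl, rfl⟩ | ⟨rfl, rfl⟩
        · exact ⟨Or.inl ⟨i, Or.inl ⟨rfl, rfl⟩⟩, Ne.symm hi⟩
        · exact ⟨Or.inl ⟨i, Or.inr ⟨rfl, rfl⟩⟩, hi⟩
        · exact ⟨Or.inr ⟨i, i + 1, rfl, rfl, Or.inl rfl⟩, hi⟩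
        · exact ⟨Or.inr ⟨i + 1, i, rfl, rfl, Or.inr rfl⟩, Ne.symm hi⟩
  have hdisj : Disjoint ((fun i => s(none, some i)) '' H)
      ((fun i : Fin (m + 3) => s(some i, some (i + 1))) '' C) := by
    rw [Set.disjoint_left]
    rintro e ⟨i, _, rfl⟩ ⟨j, _, he⟩
    rw [Sym2.eq_iff] at he
    simp at he
  have hinj1 : Function.Injective (fun i : Fin (m + 3) => s((none : Option (Fin (m+3))), some i)) := by
    intro a b hab
    simpa using hab
  have hinj2 : Function.Injective (fun i : Fin (m + 3) => s(some i, some (i + 1))) := by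
    intro a b hab
    simp only [Sym2.eq_iff, Option.some.injEq] at hab
    rcases hab with ⟨rfl, _⟩ | ⟨rfl, hab⟩
    · rfl
    · exact absurd hab.symm (fin_two_ne b)
  rw [negCount, hsplit, Set.ncard_union_eq hdisj (Set.toFinite _) (Set.toFinite _),
    Set.ncard_image_of_injective _ hinj1, Set.ncard_image_of_injective _ hinj2]

lemma icc_filter_card (N r : ℕ) (hr : r < 2) :
    ((Finset.Icc 1 N).filter (fun x => x % 2 = r)).card = (N + r) / 2 := by
  induction N with
  | zero => interval_cases r <;> simp
  | succ N ih =>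
    rw [← Finset.insert_Icc_right_eq_Icc_add_one (by omega), Finset.filter_insert]
    by_cases h : (N + 1) % 2 = r
    · rw [if_pos h, Finset.card_insert_of_notMem (by simp), ih]
      
      omega
    · rw [if_neg h, ih]
      omega

lemma ncard_parity {V : Type*} [Fintype V] (f : V → ℕ)
    (hf : Set.BijOn f Set.univ (Set.Icc 1 (Fintype.card V))) (r : ℕ) (hr : r < 2) :
    {v : V | f v % 2 = r}.ncard = (Fintype.card V + r) / 2 := by
  classical
  have himg : f '' {v : V | f v % 2 = r} = {x ∈ Set.Icc 1 (Fintype.card V) | x % 2 = r} := by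
    ext x
    constructor
    · rintro ⟨v, hv, rfl⟩
      exact ⟨hf.mapsTo (Set.mem_univ v), hv⟩
    · rintro ⟨hx, hx2⟩
      obtain ⟨v, -, rfl⟩ := hf.surjOn hx
      exact ⟨v, hx2, rfl⟩
  have h1 : {v : V | f v % 2 = r}.ncard = {x ∈ Set.Icc 1 (Fintype.card V) | x % 2 = r}.ncard := by
    rw [← himg, Set.ncard_image_of_injOn (hf.injOn.mono (Set.subset_univ _))]
  rw [h1]
  have : {x ∈ Set.Icc 1 (Fintype.card V) | x % 2 = r} =
      ↑((Finset.Icc 1 (Fintype.card V)).filter (fun x => x % 2 = r)) := by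
    ext x; simp
  rw [this, Set.ncard_coe_finset, icc_filter_card _ _ hr]

open Fin.NatCast Fin.CommRing in
lemma cycle_changes {m : ℕ} (g : Fin (m + 3) → ℕ) (a b : Fin (m + 3))
    (hab : g a % 2 ≠ g b % 2) :
    2 ≤ {i : Fin (m + 3) | g i % 2 ≠ g (i + 1) % 2}.ncard := by
  classical
  set C : Set (Fin (m + 3)) := {i | g i % 2 ≠ g (i + 1) % 2} with hCdef
  have chain : ∀ (x : Fin (m + 3)) (k : ℕ),
      (∀ j : ℕ, j < k → (x + (j : Fin (m + 3))) ∉ C) → g (x + (k : Fin (m + 3))) % 2 = g x % 2 := by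
    intro x k
    induction k with
    | zero => intro _; simp
    | succ k ih =>
      intro h
      have h1 : g (x + (k : Fin (m + 3))) % 2 = g x % 2 := ih (fun j hj => h j (by omega))
      have h2 : (x + (k : Fin (m + 3))) ∉ C := h k (by omega)
      rw [hCdef, Set.mem_setOf_eq, not_not] at h2
      have : ((k + 1 : ℕ) : Fin (m + 3)) = (k : Fin (m + 3)) + 1 := by push_cast; ring
      rw [this, ← add_assoc, ← h2, h1]
  by_contra hlt
  push_neg at hlt
  have hle : C.ncard ≤ 1 := by omega
  rcases (Set.ncard_le_one_iff_eq (Set.toFinite C)).mp hle with hC | ⟨c, hC⟩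
  · have : ∀ j : ℕ, j < (b - a).val → (a + (j : Fin (m + 3))) ∉ C := by
      intro j _; rw [hC]; exact Set.notMem_empty _
    have h1 := chain a (b - a).val this
    rw [Fin.cast_val_eq_self, add_sub_cancel] at h1
    exact hab h1.symm
  · have hcC : c ∈ C := by rw [hC]; rfl
    have hstep : ∀ j : ℕ, j < m + 2 → ((c + 1) + (j : Fin (m + 3))) ∉ C := by
      intro j hj hmem
      rw [hC, Set.mem_singleton_iff] at hmem
      have h0 : (1 + (j : Fin (m + 3)) : Fin (m + 3)) = 0 := by
        have := hmem
        rw [add_assoc] at this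
        exact left_eq_add.mp this.symm
      have hv : ((1 + (j : Fin (m + 3)) : Fin (m + 3)) : ℕ) = 0 := by rw [h0]; rfl
      rw [Fin.val_add_eq_ite] at hv
      have hj1 : ((j : Fin (m + 3)) : ℕ) = j % (m + 3) := by
        simp [Fin.val_natCast]
      have hjlt : ((j : Fin (m + 3)) : ℕ) = j := by rw [hj1, Nat.mod_eq_of_lt (by omega)]
      have h1v : ((1 : Fin (m + 3)) : ℕ) = 1 := rfl
      rw [h1v, hjlt] at hv
      split at hv <;> omega
    have h1 := chain (c + 1) (m + 2) hstep
    have hval : ((m + 2 : ℕ) : Fin (m + 3)) = (m + 2 : Fin (m + 3)) := by push_cast; ring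
    have hcyc : (c + 1) + ((m + 2 : ℕ) : Fin (m + 3)) = c := by
      rw [hval, add_assoc]
      have : (1 + (m + 2) : Fin (m + 3)) = 0 := by
        have : ((m + 3 : ℕ) : Fin (m + 3)) = 0 := Fin.natCast_self _
        rw [← this]; push_cast; ring
      rw [this, add_zero]
    rw [hcyc] at h1
    exact hcC h1

lemma card_wheel_vertices (m : ℕ) : Fintype.card (Option (Fin (m + 3))) = m + 4 := by simp

lemma wheel_lower {m : ℕ} (f : Option (Fin (m + 3)) → ℕ)
    (hf : Set.BijOn f Set.univ (Set.Icc 1 (Fintype.card (Option (Fin (m + 3)))))) :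
    (m + 8) / 2 ≤ negCount (wheelGraph (m + 3)) f := by
  classical
  rw [negCount_wheel]
  have hcard := card_wheel_vertices m
  -- counts of each parity class
  have h0 : {v : Option (Fin (m + 3)) | f v % 2 = 0}.ncard = (m + 4) / 2 := by
    rw [ncard_parity f hf 0 (by norm_num), hcard]
  have h1 : {v : Option (Fin (m + 3)) | f v % 2 = 1}.ncard = (m + 5) / 2 := by
    rw [ncard_parity f hf 1 (by norm_num), hcard]
  -- hub part: at least (m+4)/2
  have hub : (m + 4) / 2 ≤ {i : Fin (m + 3) | f (some i) % 2 ≠ f none % 2}.ncard := by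
    set r : ℕ := f none % 2 with hr
    have hrlt : r < 2 := Nat.mod_lt _ (by norm_num)
    have himg : some '' {i : Fin (m + 3) | f (some i) % 2 ≠ r}
        = {v : Option (Fin (m + 3)) | f v % 2 = 1 - r} := by
      ext v
      cases v with
      | none =>
        simp only [Set.mem_image, Set.mem_setOf_eq]
        constructor
        · rintro ⟨i, _, h⟩; exact absurd h (by simp)
        · intro h; omega
      | some i =>
        simp only [Set.mem_image, Set.mem_setOf_eq, Option.some.injEq]
        have : f (some i) % 2 < 2 := Nat.mod_lt _ (by norm_num)
        constructor
        · rintro ⟨j, hj, rfl⟩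
          omega
        · intro h; exact ⟨i, by omega, rfl⟩
    have hinj : Function.Injective (some : Fin (m + 3) → Option (Fin (m + 3))) :=
      Option.some_injective _
    have := Set.ncard_image_of_injective {i : Fin (m + 3) | f (some i) % 2 ≠ r} hinj
    rw [himg] at this
    rcases (by omega : r = 0 ∨ r = 1) with h | h
    · rw [h] at this ⊢; simp only [Nat.sub_zero] at this
      rw [← this, h1]; omega
    · rw [h] at this ⊢; simp only [Nat.sub_self] at this
      rw [← this, h0]
  -- cycle part: at least 2
  have cyc : 2 ≤ {i : Fin (m + 3) | f (some i) % 2 ≠ f (some (i + 1)) % 2}.ncard := by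
    -- find cycle vertices of both parities
    have hex : ∃ a b : Fin (m + 3), f (some a) % 2 ≠ f (some b) % 2 := by
      have hge0 : 2 ≤ {v : Option (Fin (m + 3)) | f v % 2 = 0}.ncard := by omega
      have hge1 : 2 ≤ {v : Option (Fin (m + 3)) | f v % 2 = 1}.ncard := by omega
      obtain ⟨u, hu, hun⟩ := Set.exists_ne_of_one_lt_ncard (by omega : 1 < {v : Option (Fin (m + 3)) | f v % 2 = 0}.ncard) none
      obtain ⟨u', hu', hun'⟩ := Set.exists_ne_of_one_lt_ncard (by omega : 1 < {v : Option (Fin (m + 3)) | f v % 2 = 1}.ncard) none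
      obtain ⟨a, rfl⟩ := Option.ne_none_iff_exists'.mp hun
      obtain ⟨b, rfl⟩ := Option.ne_none_iff_exists'.mp hun'
      refine ⟨a, b, ?_⟩
      have ha : f (some a) % 2 = 0 := hu
      have hb : f (some b) % 2 = 1 := hu'
      omega
    obtain ⟨a, b, hab⟩ := hex
    exact cycle_changes (fun i => f (some i)) a b hab
  omega

def wlab (m k : ℕ) : Option (Fin (m + 3)) → ℕ
  | none => 1
  | some i => if (i : ℕ) < k then 2 * ((i : ℕ) + 1) else 2 * ((i : ℕ) - k) + 3

lemma wheel_upper (m : ℕ) : ∃ f : Option (Fin (m + 3)) → ℕ,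
    Set.BijOn f Set.univ (Set.Icc 1 (Fintype.card (Option (Fin (m + 3))))) ∧
    negCount (wheelGraph (m + 3)) f = (m + 8) / 2 := by
  classical
  set k : ℕ := (m + 4) / 2 with hkdef
  have hk : m + 3 ≤ 2 * k ∧ 2 * k ≤ m + 4 ∧ 2 ≤ k ∧ k ≤ m + 2 := by omega
  refine ⟨wlab m k, ?_, ?_⟩
  · rw [card_wheel_vertices]
    refine ⟨?_, ?_, ?_⟩
    · rintro v -
      cases v with
      | none => simp [wlab]
      | some i =>
        have := i.isLt
        simp only [wlab, Set.mem_Icc]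
        split_ifs <;> omega
    · rintro u - v - h
      cases u with
      | none =>
        cases v with
        | none => rfl
        | some j => simp only [wlab] at h; split_ifs at h <;> omega
      | some i =>
        have hi := i.isLt
        cases v with
        | none => simp only [wlab] at h; split_ifs at h <;> omega
        | some j =>
          have hj := j.isLt
          simp only [wlab] at h
          congr 1
          apply Fin.ext
          split_ifs at h <;> omega
    · rintro x hx
      simp only [Set.mem_Icc] at hx
      rcases (by omega : x = 1 ∨ (x % 2 = 0 ∧ 2 ≤ x) ∨ (x % 2 = 1 ∧ 3 ≤ x)) with h | ⟨he, h2⟩ | ⟨ho, h3⟩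
      · exact ⟨none, Set.mem_univ _, by simp [wlab, h]⟩
      · refine ⟨some ⟨x / 2 - 1, by omega⟩, Set.mem_univ _, ?_⟩
        show (if x / 2 - 1 < k then 2 * ((x / 2 - 1) + 1) else 2 * ((x / 2 - 1) - k) + 3) = x
        rw [if_pos (by omega)]
        omega
      · refine ⟨some ⟨(x - 3) / 2 + k, by omega⟩, Set.mem_univ _, ?_⟩
        show (if (x - 3) / 2 + k < k then 2 * (((x - 3) / 2 + k) + 1)
          else 2 * (((x - 3) / 2 + k) - k) + 3) = x
        rw [if_neg (by omega)]
        omega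
  · rw [negCount_wheel]
    have hval : ∀ i : Fin (m + 3), ((i + 1 : Fin (m + 3)) : ℕ) =
        if (i : ℕ) = m + 2 then 0 else (i : ℕ) + 1 := by
      intro i
      rw [Fin.val_add_one]
      split_ifs with h1 h2 h2
      · rfl
      · exact absurd (by rw [h1]; rfl) h2
      · exact absurd (Fin.ext h2) h1
      · rfl
    have hH : {i : Fin (m + 3) | wlab m k (some i) % 2 ≠ wlab m k none % 2}
        = {i : Fin (m + 3) | (i : ℕ) < k} := by
      ext i
      simp only [Set.mem_setOf_eq, wlab]
      split_ifs <;> omega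
    have hHcard : {i : Fin (m + 3) | (i : ℕ) < k}.ncard = k := by
      have himg : Fin.val '' {i : Fin (m + 3) | (i : ℕ) < k} = Set.Iio k := by
        ext x
        simp only [Set.mem_image, Set.mem_setOf_eq, Set.mem_Iio]
        constructor
        · rintro ⟨i, hi, rfl⟩; exact hi
        · intro hx; exact ⟨⟨x, by omega⟩, hx, rfl⟩
      rw [← Set.ncard_image_of_injective _ Fin.val_injective, himg, ← Finset.coe_Iio,
        Set.ncard_coe_finset, Nat.card_Iio]
    have hC : {i : Fin (m + 3) | wlab m k (some i) % 2 ≠ wlab m k (some (i + 1)) % 2}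
        = {(⟨k - 1, by omega⟩ : Fin (m + 3)), (⟨m + 2, by omega⟩ : Fin (m + 3))} := by
      ext i
      simp only [Set.mem_setOf_eq, wlab, Set.mem_insert_iff, Set.mem_singleton_iff,
        Fin.ext_iff, hval i]
      have := i.isLt
      split_ifs <;> omega
    rw [hH, hHcard, hC, Set.ncard_pair (by simp only [ne_eq, Fin.ext_iff]; omega)]
    omega

/-- For `n ≥ 4`, the rna number of the wheel `W_n` on `n` vertices
(a cycle on `n - 1` vertices plus a hub) is `⌊(n+4)/2⌋`. -/
theorem rna_wheel (n : ℕ) (hn : 4 ≤ n) :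
    rnaNumber (wheelGraph (n - 1)) = (n + 4) / 2 := by
  obtain ⟨m, rfl⟩ : ∃ m, n = m + 4 := ⟨n - 4, by omega⟩
  have h1 : m + 4 - 1 = m + 3 := by omega
  rw [h1]
  have h2 : (m + 4 + 4) / 2 = (m + 8) / 2 := by omega
  rw [h2]
  obtain ⟨f, hf, hcount⟩ := wheel_upper m
  refine le_antisymm (Nat.sInf_le ⟨f, hf, hcount⟩) (le_csInf ⟨_, f, hf, hcount⟩ ?_)
  rintro b ⟨g, hg, rfl⟩
  exact wheel_lower g hg
end

section
/- For every natural number k ≥ 1, there exists a finite connected simple graph G whose rna number σ⁻(G) equals k; in particular, the star K_{1,2k} satisfies σ⁻(K_{1,2k}) = k. -/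
lemma star_adj (q : ℕ) (u v : Fin (q+1)) :
    (starGraph q).Adj u v ↔ u ≠ v ∧ (u = 0 ∨ v = 0) := by
  simp [starGraph, SimpleGraph.fromRel_adj]

-- count of numbers in Icc 1 n with given parity
lemma count_even (n : ℕ) :
    ({m ∈ Set.Icc 1 n | m % 2 = 0} : Set ℕ).ncard = n / 2 := by
  have : ({m ∈ Set.Icc 1 n | m % 2 = 0} : Set ℕ)
      = ↑((Finset.Icc 1 n).filter (fun m => m % 2 = 0)) := by
    ext m; simp
  rw [this, Set.ncard_coe_finset]
  rw [show (1:ℕ) = 0 + 1 from rfl, Finset.Icc_add_one_left_eq_Ioc]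
  rw [← Nat.Ioc_filter_dvd_card_eq_div n 2]
  congr 1
  apply Finset.filter_congr
  intro m _
  simp [Nat.dvd_iff_mod_eq_zero]

lemma count_odd (k : ℕ) :
    ({m ∈ Set.Icc 1 (2*k+1) | m % 2 = 1} : Set ℕ).ncard = k + 1 := by
  have h1 : ({m ∈ Set.Icc 1 (2*k+1) | m % 2 = 1} : Set ℕ)
      = ↑((Finset.Icc 1 (2*k+1)).filter (fun m => m % 2 = 1)) := by ext m; simp
  have h2 : ({m ∈ Set.Icc 1 (2*k+1) | m % 2 = 0} : Set ℕ)
      = ↑((Finset.Icc 1 (2*k+1)).filter (fun m => m % 2 = 0)) := by ext m; simp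
  have hc := count_even (2*k+1)
  rw [h2, Set.ncard_coe_finset] at hc
  rw [h1, Set.ncard_coe_finset]
  have htot := Finset.card_filter_add_card_filter_not
    (s := Finset.Icc 1 (2*k+1)) (p := fun m => m % 2 = 0)
  have hcard : (Finset.Icc 1 (2*k+1)).card = 2*k+1 := by simp
  have heq : (Finset.Icc 1 (2*k+1)).filter (fun m => ¬ m % 2 = 0)
      = (Finset.Icc 1 (2*k+1)).filter (fun m => m % 2 = 1) := by
    apply Finset.filter_congr; intro m _; simp [Nat.mod_two_ne_zero]
  rw [heq, hc, hcard] at htot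
  have : (2*k+1)/2 = k := by omega
  omega

lemma negCount_star (k : ℕ) (f : Fin (2*k+1) → ℕ)
    (hf : Set.BijOn f Set.univ (Set.Icc 1 (2*k+1))) :
    negCount (starGraph (2*k)) f
      = ({m ∈ Set.Icc 1 (2*k+1) | m % 2 ≠ f 0 % 2} : Set ℕ).ncard := by
  have hinj : Function.Injective (fun v : Fin (2*k+1) => s((0 : Fin (2*k+1)), v)) := by
    intro u v h
    rcases Sym2.eq_iff.mp h with ⟨-, h2⟩ | ⟨h1, h2⟩
    · exact h2
    · simp [← h1, h2]
  have hset : {e ∈ (starGraph (2*k)).edgeSet | diffParity f e}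
      = (fun v : Fin (2*k+1) => s((0 : Fin (2*k+1)), v)) '' {v | f v % 2 ≠ f 0 % 2} := by
    ext e
    induction e using Sym2.ind with
    | _ u v =>
      simp only [Set.mem_setOf_eq, Set.mem_image, SimpleGraph.mem_edgeSet, star_adj,
        diffParity, Sym2.lift_mk]
      constructor
      · rintro ⟨⟨hne, h0⟩, hp⟩
        rcases h0 with rfl | rfl
        · exact ⟨v, fun h => hp h.symm, rfl⟩
        · exact ⟨u, hp, Sym2.eq_swap⟩
      · rintro ⟨w, hw, he⟩
        rcases Sym2.eq_iff.mp he.symm with ⟨rfl, rfl⟩ | ⟨rfl, rfl⟩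
        · refine ⟨⟨fun h => hw ?_, Or.inl rfl⟩, fun h => hw h.symm⟩
          rw [← h]
        · refine ⟨⟨fun h => hw ?_, Or.inr rfl⟩, hw⟩
          rw [h]
  have himg : f '' {v | f v % 2 ≠ f 0 % 2} = {m ∈ Set.Icc 1 (2*k+1) | m % 2 ≠ f 0 % 2} := by
    ext m
    constructor
    · rintro ⟨v, hv, rfl⟩
      exact ⟨hf.mapsTo (Set.mem_univ v), hv⟩
    · rintro ⟨hm, hp⟩
      obtain ⟨v, -, rfl⟩ := hf.surjOn hm
      exact ⟨v, hp, rfl⟩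
  rw [negCount, hset, Set.ncard_image_of_injective _ hinj,
    ← himg, Set.ncard_image_of_injOn (hf.injOn.mono (Set.subset_univ _))]

lemma negCount_star_val (k : ℕ) (f : Fin (2*k+1) → ℕ)
    (hf : Set.BijOn f Set.univ (Set.Icc 1 (2*k+1))) :
    negCount (starGraph (2*k)) f = k ∨ negCount (starGraph (2*k)) f = k + 1 := by
  rw [negCount_star k f hf]
  rcases Nat.mod_two_eq_zero_or_one (f 0) with h | h
  · right
    rw [show ({m ∈ Set.Icc 1 (2*k+1) | m % 2 ≠ f 0 % 2} : Set ℕ)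
        = {m ∈ Set.Icc 1 (2*k+1) | m % 2 = 1} from by ext m; simp only [Set.mem_setOf_eq, Set.mem_Icc, h]; omega]
    exact count_odd k
  · left
    rw [show ({m ∈ Set.Icc 1 (2*k+1) | m % 2 ≠ f 0 % 2} : Set ℕ)
        = {m ∈ Set.Icc 1 (2*k+1) | m % 2 = 0} from by ext m; simp only [Set.mem_setOf_eq, Set.mem_Icc, h]; omega]
    rw [count_even]; omega

lemma negCount_star_odd (k : ℕ) (f : Fin (2*k+1) → ℕ)
    (hf : Set.BijOn f Set.univ (Set.Icc 1 (2*k+1))) (h : f 0 % 2 = 1) :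
    negCount (starGraph (2*k)) f = k := by
  rw [negCount_star k f hf,
    show ({m ∈ Set.Icc 1 (2*k+1) | m % 2 ≠ f 0 % 2} : Set ℕ)
        = {m ∈ Set.Icc 1 (2*k+1) | m % 2 = 0} from by
      ext m; simp only [Set.mem_setOf_eq, Set.mem_Icc, h]; omega,
    count_even]
  omega

lemma fbij (k : ℕ) :
    Set.BijOn (fun v : Fin (2*k+1) => v.val + 1) Set.univ (Set.Icc 1 (2*k+1)) := by
  refine ⟨fun v _ => ?_, fun u _ v _ h => ?_, fun m hm => ?_⟩
  · simp only [Set.mem_Icc]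
    exact ⟨by omega, by omega⟩
  · have h2 : u.val + 1 = v.val + 1 := h
    exact Fin.ext (by omega)
  · simp only [Set.mem_Icc] at hm
    exact ⟨⟨m - 1, by omega⟩, Set.mem_univ _, by simp; omega⟩

lemma star_rna (k : ℕ) : rnaNumber (starGraph (2*k)) = k := by
  have hcard : Fintype.card (Fin (2*k+1)) = 2*k+1 := Fintype.card_fin _
  have hmem : k ∈ {n | ∃ f : Fin (2*k+1) → ℕ,
      Set.BijOn f Set.univ (Set.Icc 1 (Fintype.card (Fin (2*k+1)))) ∧
      negCount (starGraph (2*k)) f = n} := by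
    refine ⟨fun v => v.val + 1, by rw [hcard]; exact fbij k, ?_⟩
    exact negCount_star_odd k _ (fbij k) (by simp)
  refine le_antisymm (Nat.sInf_le hmem) (le_csInf ⟨k, hmem⟩ ?_)
  rintro n ⟨f, hf, rfl⟩
  rw [hcard] at hf
  rcases negCount_star_val k f hf with h | h <;> omega

lemma star_connected (k : ℕ) : (starGraph (2*k)).Connected := by
  rw [SimpleGraph.connected_iff]
  refine ⟨?_, ⟨0⟩⟩
  have key : ∀ v : Fin (2*k+1), (starGraph (2*k)).Reachable 0 v := by
    intro v
    by_cases h : v = 0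
    · subst h; exact SimpleGraph.Reachable.refl _
    · exact ((star_adj (2*k) 0 v).mpr ⟨fun h' => h h'.symm, Or.inl rfl⟩).reachable
  intro u v
  exact (key u).symm.trans (key v)


/-- For every `k ≥ 1` there is a finite connected graph with rna
number `k`; in particular the star `K_{1,2k}` has rna number `k`. -/
theorem exists_graph_with_rna (k : ℕ) (hk : 1 ≤ k) :
    (∃ (V : Type) (_ : Fintype V) (G : SimpleGraph V), G.Connected ∧ rnaNumber G = k) ∧
      rnaNumber (starGraph (2 * k)) = k := by
  exact ⟨⟨Fin (2*k+1), inferInstance, starGraph (2*k), star_connected k, star_rna k⟩, star_rna k⟩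
end
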